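/- In the Lie algebra so(p/2+1, p/2) with p even, the triple (E, F, H) defined on the null basis {η^k, η̃^k, θ} (k = 0,…,p/2-1) by E = Σ_{k=0}^{p/2-2} a_k η^{k+1}∧η̃^k + b θ∧η̃^{p/2-1}, F = -θ_C E, H = Σ_k (p-2k) η̃^k ∧ η^k satisfies the sl₂ relations [H,E]=2E, [H,F]=-2F, [E,F]=H if and only if a_k² = (p-k)(k+1) for k = 0,…,p/2-2 and b² = (p/2)(p/2+1). -/

import Mathlib

/-!
STATEMENT 11: the Kostant–Sekiguchi triple in `so(p/2+1, p/2)`, `p = 2(qm+1)` even.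
The vector space `V` has the null basis `η^k, η̃^k` (k = 0,…,p/2-1) and `θ`, with
bilinear form `τ(η^i, η̃^j) = δ^{ij}` (symmetric) and `τ(θ,θ) = s = ±1`.  Two-forms
`u∧v` act as `w ↦ τ(v,w) u - τ(u,w) v`, and the Cartan involution is conjugation by
the map `g` exchanging `η^i ↔ η̃^i` and sending `θ ↦ s θ`.
-/

/-- Index of the null basis `{η^i} ⊕ {η̃^i} ⊕ {θ}` of `ℝ^{q+1,q}` with `q = qm+1`. -/
abbrev BasisIdx (q : ℕ) := (Fin q ⊕ Fin q) ⊕ Unit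

abbrev Vec (q : ℕ) := BasisIdx q → ℝ

def eta' {q : ℕ} (i : Fin q) : Vec q := fun x => if x = Sum.inl (Sum.inl i) then 1 else 0

def etat' {q : ℕ} (i : Fin q) : Vec q := fun x => if x = Sum.inl (Sum.inr i) then 1 else 0

def theta' {q : ℕ} : Vec q := fun x => if x = Sum.inr () then 1 else 0

/-- The bilinear form `τ`, nonzero only on `τ(η^i, η̃^j) = δ^{ij}` and `τ(θ,θ) = s`. -/
noncomputable def tau' {q : ℕ} (s : ℝ) (x y : Vec q) : ℝ :=
  (∑ i : Fin q, (x (Sum.inl (Sum.inl i)) * y (Sum.inl (Sum.inr i))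
      + x (Sum.inl (Sum.inr i)) * y (Sum.inl (Sum.inl i))))
    + s * x (Sum.inr ()) * y (Sum.inr ())

/-- The action of the two-form `u ∧ v`: `w ↦ τ(v,w) u - τ(u,w) v`. -/
noncomputable def wedge' {q : ℕ} (s : ℝ) (u v : Vec q) : Vec q → Vec q :=
  fun w => tau' s v w • u - tau' s u w • v

/-- The isometry implementing the Cartan involution: `η^i ↔ η̃^i`, `θ ↦ s θ`;
the Cartan involution of `so(q+1,q)` is `θ_C(X) = g ∘ X ∘ g`. -/
def gInv {q : ℕ} (s : ℝ) (x : Vec q) : Vec q := fun b =>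
  match b with
  | Sum.inl (Sum.inl i) => x (Sum.inl (Sum.inr i))
  | Sum.inl (Sum.inr i) => x (Sum.inl (Sum.inl i))
  | Sum.inr _ => s * x (Sum.inr ())

/-- Commutator of endomorphisms. -/
def lieBr {q : ℕ} (f g : Vec q → Vec q) : Vec q → Vec q := fun w => f (g w) - g (f w)

/-- `E = Σ_{k=0}^{p/2-2} a_k η^{k+1}∧η̃^k + b θ∧η̃^{p/2-1}`. -/
noncomputable def Enil (qm : ℕ) (s : ℝ) (a : Fin qm → ℝ) (b : ℝ) :
    Vec (qm + 1) → Vec (qm + 1) :=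
  (∑ k : Fin qm, a k • wedge' s (eta' k.succ) (etat' k.castSucc))
    + b • wedge' s theta' (etat' (Fin.last qm))

/-- `F = -θ_C E`. -/
noncomputable def Fnil (qm : ℕ) (s : ℝ) (a : Fin qm → ℝ) (b : ℝ) :
    Vec (qm + 1) → Vec (qm + 1) :=
  fun w => -gInv s (Enil qm s a b (gInv s w))

/-- `H = Σ_k (p-2k) η̃^k ∧ η^k`, `p = 2(qm+1)`. -/
noncomputable def Hcart (qm : ℕ) (s : ℝ) : Vec (qm + 1) → Vec (qm + 1) :=
  ∑ i : Fin (qm + 1), ((2 * ((qm : ℝ) + 1) - 2 * (i : ℕ)) • wedge' s (etat' i) (eta' i))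

open Sum in
section
variable {qm : ℕ} (s : ℝ) (a : Fin qm → ℝ) (b : ℝ)

lemma tau_eta (k : Fin (qm+1)) (w : Vec (qm+1)) :
    tau' s (eta' k) w = w (inl (inr k)) := by
  simp [tau', eta', Finset.sum_ite_eq, Finset.sum_ite_eq']

lemma tau_etat (k : Fin (qm+1)) (w : Vec (qm+1)) :
    tau' s (etat' k) w = w (inl (inl k)) := by
  simp [tau', etat', Finset.sum_ite_eq, Finset.sum_ite_eq']

lemma tau_theta (w : Vec (qm+1)) :
    tau' s (theta' (q := qm+1)) w = s * w (inr ()) := by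
  simp [tau', theta']

end
open Sum Fin in
section
variable {qm : ℕ} (s : ℝ) (a : Fin qm → ℝ) (b : ℝ) (w : Vec (qm+1))

lemma Enil_apply (x : BasisIdx (qm+1)) :
    Enil qm s a b w x
      = (∑ k : Fin qm, a k * wedge' s (eta' k.succ) (etat' k.castSucc) w x)
        + b * wedge' s theta' (etat' (Fin.last qm)) w x := by
  simp [Enil, Finset.sum_apply, Pi.smul_apply]

lemma Enil_eta_zero : Enil qm s a b w (inl (inl 0)) = 0 := by
  rw [Enil_apply]
  simp [wedge', tau_eta, tau_etat, tau_theta, eta', etat', theta',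
    (Fin.succ_ne_zero _).symm]

lemma Enil_eta_succ (k : Fin qm) :
    Enil qm s a b w (inl (inl k.succ)) = a k * w (inl (inl k.castSucc)) := by
  rw [Enil_apply]
  simp [wedge', tau_eta, tau_etat, tau_theta, eta', etat', theta', Fin.succ_inj]

lemma Enil_etat_cast (k : Fin qm) :
    Enil qm s a b w (inl (inr k.castSucc)) = -(a k) * w (inl (inr k.succ)) := by
  rw [Enil_apply]
  simp [wedge', tau_eta, tau_etat, tau_theta, eta', etat', theta',
    Fin.castSucc_inj, (Fin.castSucc_lt_last _).ne]

lemma Enil_etat_last :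
    Enil qm s a b w (inl (inr (Fin.last qm))) = -(b * s) * w (inr ()) := by
  rw [Enil_apply]
  simp [wedge', tau_eta, tau_etat, tau_theta, eta', etat', theta',
    (Fin.castSucc_lt_last _).ne']
  ring

lemma Enil_theta :
    Enil qm s a b w (inr ()) = b * w (inl (inl (Fin.last qm))) := by
  rw [Enil_apply]
  simp [wedge', tau_eta, tau_etat, tau_theta, eta', etat', theta']

end
open Sum Fin in
section
variable {qm : ℕ} (s : ℝ) (a : Fin qm → ℝ) (b : ℝ) (w : Vec (qm+1))

lemma gInv_eta (x : Vec (qm+1)) (i : Fin (qm+1)) :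
    gInv s x (inl (inl i)) = x (inl (inr i)) := rfl

lemma gInv_etat (x : Vec (qm+1)) (i : Fin (qm+1)) :
    gInv s x (inl (inr i)) = x (inl (inl i)) := rfl

lemma gInv_theta (x : Vec (qm+1)) (u : Unit) :
    gInv s x (inr u) = s * x (inr ()) := rfl

lemma Fnil_eta_last :
    Fnil qm s a b w (inl (inl (Fin.last qm))) = b * s * s * w (inr ()) := by
  simp only [Fnil, Pi.neg_apply, gInv_eta, gInv_etat, gInv_theta, Enil_etat_last]
  ring

lemma Fnil_eta_cast (k : Fin qm) :
    Fnil qm s a b w (inl (inl k.castSucc)) = a k * w (inl (inl k.succ)) := by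
  simp only [Fnil, Pi.neg_apply, gInv_eta, gInv_etat, gInv_theta, Enil_etat_cast]
  ring

lemma Fnil_etat_zero : Fnil qm s a b w (inl (inr 0)) = 0 := by
  simp only [Fnil, Pi.neg_apply, gInv_eta, gInv_etat, gInv_theta, Enil_eta_zero]
  ring

lemma Fnil_etat_succ (k : Fin qm) :
    Fnil qm s a b w (inl (inr k.succ)) = -(a k) * w (inl (inr k.castSucc)) := by
  simp only [Fnil, Pi.neg_apply, gInv_eta, gInv_etat, gInv_theta, Enil_eta_succ]
  ring

lemma Fnil_theta :
    Fnil qm s a b w (inr ()) = -(s * b) * w (inl (inr (Fin.last qm))) := by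
  simp only [Fnil, Pi.neg_apply, gInv_eta, gInv_etat, gInv_theta, Enil_theta]
  ring

lemma Hcart_apply (x : BasisIdx (qm+1)) :
    Hcart qm s w x
      = ∑ i : Fin (qm+1),
          (2 * ((qm : ℝ) + 1) - 2 * (i : ℕ)) * wedge' s (etat' i) (eta' i) w x := by
  simp [Hcart, Finset.sum_apply, Pi.smul_apply]

lemma Hcart_eta (i : Fin (qm+1)) :
    Hcart qm s w (inl (inl i))
      = -(2 * ((qm : ℝ) + 1) - 2 * (i : ℕ)) * w (inl (inl i)) := by
  rw [Hcart_apply]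
  simp [wedge', tau_eta, tau_etat, eta', etat']
  ring

lemma Hcart_etat (i : Fin (qm+1)) :
    Hcart qm s w (inl (inr i))
      = (2 * ((qm : ℝ) + 1) - 2 * (i : ℕ)) * w (inl (inr i)) := by
  rw [Hcart_apply]
  simp [wedge', tau_eta, tau_etat, eta', etat']

lemma Hcart_theta : Hcart qm s w (inr ()) = 0 := by
  rw [Hcart_apply]
  simp [wedge', tau_eta, tau_etat, tau_theta, eta', etat', theta']

end
open Sum Fin in
section
variable {qm : ℕ} (s : ℝ) (a : Fin qm → ℝ) (b : ℝ)

lemma HE_rel : lieBr (Hcart qm s) (Enil qm s a b) = (2 : ℝ) • Enil qm s a b := by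
  funext w x
  simp only [lieBr, Pi.sub_apply, Pi.smul_apply, smul_eq_mul]
  rcases x with ((i | i) | u)
  · induction i using Fin.cases with
    | zero => simp only [Enil_eta_zero, Hcart_eta]; ring
    | succ k =>
      simp only [Enil_eta_succ, Hcart_eta, Fin.val_succ, Fin.coe_castSucc]
      push_cast; ring
  · induction i using Fin.lastCases with
    | last =>
      simp only [Enil_etat_last, Hcart_etat, Hcart_theta, Fin.val_last]
      push_cast; ring
    | cast k =>
      simp only [Enil_etat_cast, Hcart_etat, Fin.val_succ, Fin.coe_castSucc]
      push_cast; ring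
  · cases u
    simp only [Enil_theta, Hcart_theta, Hcart_eta, Fin.val_last]
    push_cast; ring

lemma HF_rel : lieBr (Hcart qm s) (Fnil qm s a b) = (-2 : ℝ) • Fnil qm s a b := by
  funext w x
  simp only [lieBr, Pi.sub_apply, Pi.smul_apply, smul_eq_mul]
  rcases x with ((i | i) | u)
  · induction i using Fin.lastCases with
    | last =>
      simp only [Fnil_eta_last, Hcart_eta, Hcart_theta, Fin.val_last]
      push_cast; ring
    | cast k =>
      simp only [Fnil_eta_cast, Hcart_eta, Fin.val_succ, Fin.coe_castSucc]
      push_cast; ring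
  · induction i using Fin.cases with
    | zero => simp only [Fnil_etat_zero, Hcart_etat]; ring
    | succ k =>
      simp only [Fnil_etat_succ, Hcart_etat, Fin.val_succ, Fin.coe_castSucc]
      push_cast; ring
  · cases u
    simp only [Fnil_theta, Hcart_theta, Hcart_etat, Fin.val_last]
    push_cast; ring

end
open Sum Fin in
lemma EF_rel (qm : ℕ) (s : ℝ) (a : Fin qm → ℝ) (b : ℝ) (s2 : s * s = 1)
    (ha : ∀ k : Fin qm, (a k) ^ 2 = (2 * ((qm : ℝ) + 1) - (k : ℕ)) * ((k : ℕ) + 1))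
    (hb : b ^ 2 = ((qm : ℝ) + 1) * ((qm : ℝ) + 2)) :
    lieBr (Enil qm s a b) (Fnil qm s a b) = Hcart qm s := by
  have hbs : b * s * s * b = ((qm : ℝ) + 1) * ((qm : ℝ) + 2) := by
    have h : b * s * s * b = (s * s) * b ^ 2 := by ring
    rw [h, s2, one_mul, hb]
  cases qm with
  | zero =>
    push_cast at hbs
    funext w x
    simp only [lieBr, Pi.sub_apply]
    rcases x with ((i | i) | u)
    · have hi : i = Fin.last 0 := Fin.ext (by omega)
      subst hi
      have hA : Enil 0 s a b (Fnil 0 s a b w) (inl (inl (Fin.last 0))) = 0 := by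
        rw [show (Fin.last 0 : Fin 1) = 0 from rfl]; exact Enil_eta_zero s a b _
      rw [hA, Fnil_eta_last, Enil_theta, Hcart_eta]
      simp only [Fin.val_last]
      push_cast
      rw [show (0 : Fin 1) = Fin.last 0 from rfl]
      linear_combination (-(w (inl (inl (Fin.last 0))))) * hbs
    · have hi : i = Fin.last 0 := Fin.ext (by omega)
      subst hi
      have hB : Fnil 0 s a b (Enil 0 s a b w) (inl (inr (Fin.last 0))) = 0 := by
        rw [show (Fin.last 0 : Fin 1) = 0 from rfl]; exact Fnil_etat_zero s a b _
      rw [hB, Enil_etat_last, Fnil_theta, Hcart_etat]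
      simp only [Fin.val_last]
      push_cast
      rw [show (0 : Fin 1) = Fin.last 0 from rfl]
      linear_combination (w (inl (inr (Fin.last 0)))) * hbs
    · cases u
      rw [Enil_theta, Fnil_eta_last, Fnil_theta, Enil_etat_last, Hcart_theta]
      ring
  | succ n =>
    push_cast at hbs
    funext w x
    simp only [lieBr, Pi.sub_apply]
    rcases x with ((i | i) | u)
    · induction i using Fin.cases with
      | zero =>
        rw [Enil_eta_zero]
        rw [show (inl (inl (0 : Fin (n+2))) : BasisIdx (n+2))
              = inl (inl ((0 : Fin (n+1)).castSucc)) by simp]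
        rw [Fnil_eta_cast, Enil_eta_succ, Hcart_eta]
        have h0 := ha 0
        simp only [Fin.coe_castSucc, Fin.val_zero] at h0 ⊢
        push_cast at h0 ⊢
        linear_combination (-(w (inl (inl ((0 : Fin (n+1)).castSucc))))) * h0
      | succ k =>
        rw [Enil_eta_succ, Fnil_eta_cast]
        induction k using Fin.lastCases with
        | last =>
          rw [show (inl (inl (Fin.last n).succ) : BasisIdx (n+2))
                = inl (inl (Fin.last (n+1))) by rw [Fin.succ_last]]
          rw [Fnil_eta_last, Enil_theta, Hcart_eta]
          have h1 := ha (Fin.last n)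
          simp only [Fin.succ_last, Fin.val_last] at h1 ⊢
          push_cast at h1 ⊢
          linear_combination (w (inl (inl (Fin.last (n+1))))) * h1
            - (w (inl (inl (Fin.last (n+1))))) * hbs
        | cast j =>
          rw [show (inl (inl (j.castSucc).succ) : BasisIdx (n+2))
                = inl (inl ((j.succ).castSucc)) by rw [Fin.succ_castSucc]]
          rw [Fnil_eta_cast, Enil_eta_succ, Hcart_eta]
          have h1 := ha j.castSucc
          have h2 := ha j.succ
          simp only [Fin.coe_castSucc, Fin.val_succ] at h1 h2 ⊢
          push_cast at h1 h2 ⊢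
          linear_combination (w (inl (inl ((j.succ).castSucc)))) * h1
            - (w (inl (inl ((j.succ).castSucc)))) * h2
    · induction i using Fin.cases with
      | zero =>
        rw [show (inl (inr (0 : Fin (n+2))) : BasisIdx (n+2))
              = inl (inr ((0 : Fin (n+1)).castSucc)) by simp]
        rw [Enil_etat_cast, Fnil_etat_succ, Hcart_etat]
        rw [show ((0 : Fin (n+1)).castSucc) = (0 : Fin (n+2)) by simp,
          Fnil_etat_zero]
        have h0 := ha 0
        simp only [Fin.coe_castSucc, Fin.val_zero] at h0 ⊢
        push_cast at h0 ⊢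
        linear_combination (w (inl (inr (0 : Fin (n+2))))) * h0
      | succ k =>
        rw [Fnil_etat_succ, Enil_etat_cast]
        induction k using Fin.lastCases with
        | last =>
          rw [show (inl (inr (Fin.last n).succ) : BasisIdx (n+2))
                = inl (inr (Fin.last (n+1))) by rw [Fin.succ_last]]
          rw [Enil_etat_last, Fnil_theta, Hcart_etat]
          have h1 := ha (Fin.last n)
          simp only [Fin.succ_last, Fin.val_last] at h1 ⊢
          push_cast at h1 ⊢
          linear_combination (w (inl (inr (Fin.last (n+1))))) * hbs
            - (w (inl (inr (Fin.last (n+1))))) * h1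
        | cast j =>
          rw [show (inl (inr (j.castSucc).succ) : BasisIdx (n+2))
                = inl (inr ((j.succ).castSucc)) by rw [Fin.succ_castSucc]]
          rw [Enil_etat_cast, Fnil_etat_succ, Hcart_etat]
          have h1 := ha j.castSucc
          have h2 := ha j.succ
          simp only [Fin.coe_castSucc, Fin.val_succ] at h1 h2 ⊢
          push_cast at h1 h2 ⊢
          linear_combination (w (inl (inr ((j.succ).castSucc)))) * h2
            - (w (inl (inr ((j.succ).castSucc)))) * h1
    · cases u
      rw [Enil_theta, Fnil_eta_last, Fnil_theta, Enil_etat_last, Hcart_theta]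
      ring
open Sum Fin in
lemma EF_extract (qm : ℕ) (s : ℝ) (a : Fin qm → ℝ) (b : ℝ) (s2 : s * s = 1)
    (h3 : lieBr (Enil qm s a b) (Fnil qm s a b) = Hcart qm s) :
    (∀ k : Fin qm, (a k) ^ 2 = (2 * ((qm : ℝ) + 1) - (k : ℕ)) * ((k : ℕ) + 1)) ∧
      b ^ 2 = ((qm : ℝ) + 1) * ((qm : ℝ) + 2) := by
  cases qm with
  | zero =>
    refine ⟨fun k => k.elim0, ?_⟩
    have h := congrFun (congrFun h3 (etat' (Fin.last 0))) (inl (inr (Fin.last 0)))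
    simp only [lieBr, Pi.sub_apply] at h
    rw [Enil_etat_last, Fnil_theta] at h
    have hB : Fnil 0 s a b (Enil 0 s a b (etat' (Fin.last 0)))
        (inl (inr (Fin.last 0))) = 0 := by
      rw [show (Fin.last 0 : Fin 1) = 0 from rfl]; exact Fnil_etat_zero s a b _
    rw [hB, Hcart_etat] at h
    simp only [etat', Fin.val_last, if_pos rfl] at h
    norm_num at h
    push_cast
    linear_combination h - b * b * s2
  | succ n =>
    have key : ∀ k : Fin (n+1),
        (a k) ^ 2 = (2 * (((n+1 : ℕ) : ℝ) + 1) - (k : ℕ)) * ((k : ℕ) + 1) := by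
      intro k
      induction k using Fin.induction with
      | zero =>
        have h := congrFun (congrFun h3 (etat' ((0 : Fin (n+1)).castSucc)))
          (inl (inr ((0 : Fin (n+1)).castSucc)))
        simp only [lieBr, Pi.sub_apply] at h
        rw [Enil_etat_cast, Fnil_etat_succ, Hcart_etat] at h
        rw [show ((0 : Fin (n+1)).castSucc) = (0 : Fin (n+2)) from rfl] at h
        rw [Fnil_etat_zero] at h
        simp only [etat', if_pos rfl] at h
        norm_num at h
        push_cast [Fin.val_zero] at h ⊢
        linear_combination h
      | succ j ih =>
        have h := congrFun (congrFun h3 (etat' ((j.succ).castSucc)))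
          (inl (inr ((j.succ).castSucc)))
        simp only [lieBr, Pi.sub_apply] at h
        rw [Enil_etat_cast, Fnil_etat_succ, Hcart_etat] at h
        rw [show ((j.succ).castSucc : Fin (n+2)) = (j.castSucc).succ
              from (Fin.succ_castSucc j).symm] at h
        rw [Fnil_etat_succ, Enil_etat_cast] at h
        simp only [etat', if_pos rfl] at h
        norm_num at h
        push_cast [Fin.coe_castSucc, Fin.val_succ] at h ih ⊢
        linear_combination h + ih
    refine ⟨key, ?_⟩
    have h := congrFun (congrFun h3 (etat' (Fin.last (n+1))))
      (inl (inr (Fin.last (n+1))))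
    simp only [lieBr, Pi.sub_apply] at h
    rw [Enil_etat_last, Fnil_theta, Hcart_etat] at h
    rw [show (Fin.last (n+1) : Fin (n+2)) = (Fin.last n).succ
          from (Fin.succ_last n).symm] at h
    rw [Fnil_etat_succ, Enil_etat_cast] at h
    simp only [etat', if_pos rfl] at h
    norm_num at h
    have hk := key (Fin.last n)
    push_cast [Fin.val_last, Fin.val_succ] at h hk ⊢
    linear_combination h + hk - b * b * s2
theorem stmt11 (qm : ℕ) (s : ℝ) (hs : s = 1 ∨ s = -1)
    (a : Fin qm → ℝ) (b : ℝ) :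
    (lieBr (Hcart qm s) (Enil qm s a b) = (2 : ℝ) • Enil qm s a b ∧
     lieBr (Hcart qm s) (Fnil qm s a b) = (-2 : ℝ) • Fnil qm s a b ∧
     lieBr (Enil qm s a b) (Fnil qm s a b) = Hcart qm s)
    ↔ ((∀ k : Fin qm, (a k) ^ 2 = (2 * ((qm : ℝ) + 1) - (k : ℕ)) * ((k : ℕ) + 1)) ∧
        b ^ 2 = ((qm : ℝ) + 1) * ((qm : ℝ) + 2)) := by
  have s2 : s * s = 1 := by rcases hs with h | h <;> rw [h] <;> norm_num
  constructor
  · rintro ⟨-, -, h3⟩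
    exact EF_extract qm s a b s2 h3
  · rintro ⟨ha, hb⟩
    exact ⟨HE_rel s a b, HF_rel s a b, EF_rel qm s a b s2 ha hb⟩
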